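/- Let m, n be non-negative integers and let V₁^{⊗m} ⊗ V₂^{⊗n} = ⊕_μ V_μ^{⊕a_μ} be the decomposition into irreducibles of SU(3), where V₁ is the standard representation and V₂ = ∧²V₁. Let ℵ(l₁,l₂) = l₂ω₁ + l₁ω₂ denote the dominant weight parametrized by (l₁,l₂) ∈ ℤ_{≥0}², where ω₁, ω₂ are the fundamental weights. Then for any real α > 0 and prime p, Σ_{l₁≥0, l₂≥0} a_{ℵ(l₁,l₂)} · p^{α(l₁+l₂)} ≤ (p^α + 1 + p^{−α})^{m+n}. -/

import Mathlib

/-- Let V₁^{⊗m} ⊗ V₂^{⊗n} = ⊕_μ V_μ^{⊕a_μ} be the decomposition into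
irreducibles of SU(3), expressed on the level of formal characters in the group ring
ℤ[Λ] of the weight lattice Λ ≅ ℤ² (coordinates in the fundamental weights ω₁, ω₂):
χ₁^m χ₂^n = Σ_{(l₁,l₂)} a(l₁,l₂) · χ_{ℵ(l₁,l₂)}, where ℵ(l₁,l₂) = l₂ω₁ + l₁ω₂ and
χ_{ℵ(l₁,l₂)} is the irreducible character of highest weight ℵ(l₁,l₂) (whose highest
weight coefficient is 1 and all of whose coefficients are non-negative).
Then for a prime p and real α > 0,
Σ_{l₁,l₂ ≥ 0} a(l₁,l₂) p^{α(l₁+l₂)} ≤ (p^α + 1 + p^{-α})^{m+n}. -/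
theorem su3_multiplicity_sum_bound
    (p : ℕ) (hp : p.Prime) (α : ℝ) (hα : 0 < α) (m n : ℕ)
    (χ₁ χ₂ : AddMonoidAlgebra ℤ (ℤ × ℤ))
    (h1 : χ₁ = AddMonoidAlgebra.single ((1 : ℤ), (0 : ℤ)) 1 + AddMonoidAlgebra.single ((-1 : ℤ), (1 : ℤ)) 1
      + AddMonoidAlgebra.single ((0 : ℤ), (-1 : ℤ)) 1)
    (h2 : χ₂ = AddMonoidAlgebra.single ((0 : ℤ), (1 : ℤ)) 1 + AddMonoidAlgebra.single ((1 : ℤ), (-1 : ℤ)) 1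
      + AddMonoidAlgebra.single ((-1 : ℤ), (0 : ℤ)) 1)
    (χW : ℕ × ℕ → AddMonoidAlgebra ℤ (ℤ × ℤ))
    (hχW_hw : ∀ l : ℕ × ℕ, (χW l).coeff ((l.2 : ℤ), (l.1 : ℤ)) = 1)
    (hχW_nonneg : ∀ (l : ℕ × ℕ) (μ : ℤ × ℤ), 0 ≤ (χW l).coeff μ)
    (a : (ℕ × ℕ) →₀ ℕ)
    (hdecomp : χ₁ ^ m * χ₂ ^ n = a.sum (fun l c => (c : ℤ) • χW l)) :
    a.sum (fun l c => (c : ℝ) * ((p : ℝ) ^ α) ^ (l.1 + l.2))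
      ≤ ((p : ℝ) ^ α + 1 + (p : ℝ) ^ (-α)) ^ (m + n) := by
  have hp0 : (0 : ℝ) < (p : ℝ) := by exact_mod_cast hp.pos
  set t : ℝ := (p : ℝ) ^ α with ht_def
  have ht : 0 < t := Real.rpow_pos_of_pos hp0 α
  have htne : t ≠ 0 := ht.ne'
  set g : Multiplicative (ℤ × ℤ) →* ℝ :=
    { toFun := fun μ => t ^ ((Multiplicative.toAdd μ).1 + (Multiplicative.toAdd μ).2)
      map_one' := by simp
      map_mul' := by
        intro x y
        have h : Multiplicative.toAdd (x * y) = Multiplicative.toAdd x + Multiplicative.toAdd y :=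
          rfl
        rw [h, Prod.fst_add, Prod.snd_add, ← zpow_add₀ htne]
        congr 1
        ring } with hg_def
  set φ : AddMonoidAlgebra ℤ (ℤ × ℤ) →+* ℝ :=
    AddMonoidAlgebra.liftNCRingHom (Int.castRingHom ℝ) g (fun _ _ => Commute.all _ _) with hφ_def
  have hφ_single : ∀ (μ : ℤ × ℤ) (c : ℤ),
      φ (AddMonoidAlgebra.single μ c) = (c : ℝ) * t ^ (μ.1 + μ.2) := by
    intro μ c
    simp [hφ_def, AddMonoidAlgebra.liftNCRingHom, hg_def]
  have hφχ₁ : φ χ₁ = t + 1 + t⁻¹ := by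
    rw [h1]
    simp only [map_add, hφ_single]
    norm_num [zpow_neg]
  have hφχ₂ : φ χ₂ = t + 1 + t⁻¹ := by
    rw [h2]
    simp only [map_add, hφ_single]
    norm_num [zpow_neg]
  have hkey : ∀ l : ℕ × ℕ, (t ^ (l.1 + l.2) : ℝ) ≤ φ (χW l) := by
    intro l
    have hχ : φ (χW l) = (χW l).coeff.sum fun μ c => (c : ℝ) * t ^ (μ.1 + μ.2) := by
      conv_lhs => rw [← AddMonoidAlgebra.sum_coeff_single (χW l)]
      rw [map_finsuppSum]
      exact Finsupp.sum_congr fun μ _ => hφ_single μ _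
    rw [hχ, Finsupp.sum]
    have hmem : ((l.2 : ℤ), (l.1 : ℤ)) ∈ (χW l).coeff.support := by
      rw [Finsupp.mem_support_iff, hχW_hw l]; exact one_ne_zero
    have hle := Finset.single_le_sum (f := fun μ : ℤ × ℤ => ((χW l).coeff μ : ℝ) * t ^ (μ.1 + μ.2))
      (fun μ _ => mul_nonneg (by exact_mod_cast hχW_nonneg l μ) (le_of_lt (zpow_pos ht _))) hmem
    calc (t : ℝ) ^ (l.1 + l.2)
        = ((χW l).coeff ((l.2 : ℤ), (l.1 : ℤ)) : ℝ) * t ^ (((l.2 : ℤ), (l.1 : ℤ)).1 + ((l.2 : ℤ), (l.1 : ℤ)).2) := by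
          rw [hχW_hw l]
          push_cast
          rw [← zpow_natCast t (l.1 + l.2)]
          push_cast
          ring_nf
      _ ≤ _ := hle
  -- main computation
  have hmain : φ (χ₁ ^ m * χ₂ ^ n) = (t + 1 + t⁻¹) ^ (m + n) := by
    rw [map_mul, map_pow, map_pow, hφχ₁, hφχ₂, ← pow_add]
  have hrhs : φ (a.sum fun l c => (c : ℤ) • χW l) = a.sum fun l c => (c : ℝ) * φ (χW l) := by
    rw [map_finsuppSum]
    exact Finsupp.sum_congr fun l _ => by rw [map_zsmul, zsmul_eq_mul]; push_cast; ring
  have hsum_le : a.sum (fun l c => (c : ℝ) * t ^ (l.1 + l.2))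
      ≤ a.sum fun l c => (c : ℝ) * φ (χW l) := by
    refine Finset.sum_le_sum fun l _ => ?_
    exact mul_le_mul_of_nonneg_left (hkey l) (by positivity)
  have : a.sum (fun l c => (c : ℝ) * t ^ (l.1 + l.2)) ≤ (t + 1 + t⁻¹) ^ (m + n) := by
    calc a.sum (fun l c => (c : ℝ) * t ^ (l.1 + l.2)) ≤ _ := hsum_le
      _ = φ (a.sum fun l c => (c : ℤ) • χW l) := hrhs.symm
      _ = φ (χ₁ ^ m * χ₂ ^ n) := by rw [hdecomp]
      _ = (t + 1 + t⁻¹) ^ (m + n) := hmain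
  have hinv : t⁻¹ = (p : ℝ) ^ (-α) := by
    rw [ht_def, Real.rpow_neg hp0.le]
  rw [← hinv]
  exact this
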